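/- A bounded operator T on a complex Hilbert space is quasi *-paranormal (‖T*Tx‖² ≤ ‖T³x‖·‖Tx‖ for all x) if and only if for every real λ > 0 the operator T*[(T*)²T² − 2λTT* + λ²I]T is positive. -/

import Mathlib

lemma key_inner
    {H : Type*} [NormedAddCommGroup H] [InnerProductSpace ℂ H] [CompleteSpace H]
    (T : H →L[ℂ] H) (lam : ℝ) (x : H) :
    (@inner ℂ _ _
          (((ContinuousLinearMap.adjoint T) *
            ((ContinuousLinearMap.adjoint T) ^ 2 * T ^ 2
              - (2 * (lam : ℂ)) • (T * ContinuousLinearMap.adjoint T)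
              + ((lam : ℂ) ^ 2) • (1 : H →L[ℂ] H)) * T) x) x).re
      = ‖(T ^ 3) x‖ ^ 2 - 2 * lam * ‖(ContinuousLinearMap.adjoint T) (T x)‖ ^ 2
        + lam ^ 2 * ‖T x‖ ^ 2 := by
  simp only [ContinuousLinearMap.mul_apply, ContinuousLinearMap.add_apply,
    ContinuousLinearMap.sub_apply, ContinuousLinearMap.smul_apply,
    ContinuousLinearMap.one_apply, pow_succ, pow_zero, one_mul,
    ContinuousLinearMap.adjoint_inner_left, inner_add_left, inner_sub_left,
    inner_smul_left]
  rw [← ContinuousLinearMap.adjoint_inner_right T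
      ((ContinuousLinearMap.adjoint T) (T x)) (T x)]
  rw [inner_self_eq_norm_sq_to_K, inner_self_eq_norm_sq_to_K, inner_self_eq_norm_sq_to_K]
  simp [Complex.add_re, Complex.sub_re, Complex.mul_re, ← Complex.ofReal_pow]
  ring

theorem quasi_star_paranormal_iff_positive
    {H : Type*} [NormedAddCommGroup H] [InnerProductSpace ℂ H] [CompleteSpace H]
    (T : H →L[ℂ] H) :
    (∀ x : H, ‖(ContinuousLinearMap.adjoint T) (T x)‖ ^ 2 ≤ ‖(T ^ 3) x‖ * ‖T x‖) ↔
      (∀ lam : ℝ, 0 < lam → ∀ x : H,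
        0 ≤ (@inner ℂ _ _
          (((ContinuousLinearMap.adjoint T) *
            ((ContinuousLinearMap.adjoint T) ^ 2 * T ^ 2
              - (2 * (lam : ℂ)) • (T * ContinuousLinearMap.adjoint T)
              + ((lam : ℂ) ^ 2) • (1 : H →L[ℂ] H)) * T) x) x).re) := by
  constructor
  · intro h lam hlam x
    rw [key_inner]
    have h1 := h x
    nlinarith [sq_nonneg (‖(T ^ 3) x‖ - lam * ‖T x‖), norm_nonneg ((T ^ 3) x),
      norm_nonneg (T x), hlam.le]
  · intro h x
    have key : ∀ lam : ℝ, 0 < lam →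
        0 ≤ ‖(T ^ 3) x‖ ^ 2 - 2 * lam * ‖(ContinuousLinearMap.adjoint T) (T x)‖ ^ 2
          + lam ^ 2 * ‖T x‖ ^ 2 := by
      intro lam hlam
      have := h lam hlam x
      rwa [key_inner] at this
    by_cases hb : ‖T x‖ = 0
    · have hTx : T x = 0 := norm_eq_zero.mp hb
      simp [hTx]
    · have hb' : 0 < ‖T x‖ := (norm_nonneg _).lt_of_ne' hb
      by_cases ha : ‖(T ^ 3) x‖ = 0
      · -- then for all lam>0, 2 lam c ≤ lam² b², so c ≤ lam b²/2 → c ≤ 0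
        have hc : ‖(ContinuousLinearMap.adjoint T) (T x)‖ ^ 2 ≤ 0 := by
          by_contra hc
          push_neg at hc
          set c := ‖(ContinuousLinearMap.adjoint T) (T x)‖ ^ 2
          set b := ‖T x‖
          have hlam : 0 < c / (b ^ 2 + c) := by positivity
          have := key _ hlam
          rw [ha] at this
          have hbc : 0 < b ^ 2 + c := by positivity
          rw [div_pow] at this
          field_simp at this
          have hpos := mul_pos (mul_pos hc hc) (add_pos (pow_pos hb' 2) (mul_pos two_pos hc))
          nlinarith [mul_pos (mul_pos (mul_pos hc hc) hbc)
            (by positivity : (0:ℝ) < b ^ 2 + 2 * c)]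
        have : ‖(ContinuousLinearMap.adjoint T) (T x)‖ ^ 2 = 0 :=
          le_antisymm hc (by positivity)
        rw [this]
        positivity
      · have ha' : 0 < ‖(T ^ 3) x‖ := (norm_nonneg _).lt_of_ne' ha
        have hlam : 0 < ‖(T ^ 3) x‖ / ‖T x‖ := by positivity
        have := key _ hlam
        set a := ‖(T ^ 3) x‖
        set b := ‖T x‖
        set c := ‖(ContinuousLinearMap.adjoint T) (T x)‖ ^ 2 with hc
        have e1 : (a / b) ^ 2 * b ^ 2 = a ^ 2 := by field_simp
        rw [e1] at this
        have h3 : (a / b) * c ≤ a ^ 2 := by linarith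
        rw [div_mul_eq_mul_div, div_le_iff₀ hb'] at h3
        calc c ≤ a * b := by nlinarith [h3, ha']
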